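/- Let G be a graph with vertex set S, and let (S₁, S₀, S₂) be a separation of S (S = S₁ ∪ S₂, S₀ = S₁ ∩ S₂, no edges between S₁ − S₀ and S₂ − S₀) such that S₀ induces a complete subgraph. If B ⊆ S₁ is a minimal (c,d)-separator of the induced subgraph on S₁ (with c,d ∈ S₁), then B is a minimal (c,d)-separator of G. -/

import Mathlib

/-- `B` is a `(c,f)`-separator of `G`: `c, f ∉ B` and `c` and `f` lie in different
connected components of the induced subgraph `G − B`. -/
def SimpleGraph.IsSeparator {V : Type*} (G : SimpleGraph V) (c f : V) (Bs : Set V) : Prop :=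
  ∃ (hc : c ∈ Bsᶜ) (hf : f ∈ Bsᶜ), ¬ (G.induce Bsᶜ).Reachable ⟨c, hc⟩ ⟨f, hf⟩

/-- `B` is a minimal `(c,f)`-separator: no proper subset of `B` is a `(c,f)`-separator. -/
def SimpleGraph.IsMinSeparator {V : Type*} (G : SimpleGraph V) (c f : V) (Bs : Set V) : Prop :=
  G.IsSeparator c f Bs ∧ ∀ Bs' ⊂ Bs, ¬ G.IsSeparator c f Bs'

/-- `u` and `g` lie in the same connected component of `G − B`. -/
def SimpleGraph.InSepComp {V : Type*} (G : SimpleGraph V) (Bs : Set V) (u g : V) : Prop :=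
  ∃ (hu : u ∈ Bsᶜ) (hg : g ∈ Bsᶜ), (G.induce Bsᶜ).Reachable ⟨u, hu⟩ ⟨g, hg⟩

open SimpleGraph

private lemma aux_inner {V : Type*} (G : SimpleGraph V) {B S₁ S₀ S₂ : Set V}
    (hcover : S₁ ∪ S₂ = Set.univ) (hsub : S₀ ⊆ S₁)
    (hedge : ∀ a ∈ S₁ \ S₀, ∀ b ∈ S₂ \ S₀, ¬ G.Adj a b) :
    ∀ {w v : ↥Bᶜ} (q : (G.induce Bᶜ).Walk w v), (w : V) ∉ S₁ → (v : V) ∈ S₁ →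
      ∃ (x : ↥Bᶜ) (r : (G.induce Bᶜ).Walk x v), (x : V) ∈ S₀ ∧ r.length ≤ q.length := by
  intro w v q
  induction q with
  | nil => intro hw hv; exact absurd hv hw
  | @cons w y v h q ih =>
    intro hw hv
    by_cases hy : (y : V) ∈ S₁
    · -- y ∈ S₀
      have hw2 : (w : V) ∈ S₂ := by
        have : (w : V) ∈ S₁ ∪ S₂ := by rw [hcover]; trivial
        exact this.resolve_left hw
      have hy0 : (y : V) ∈ S₀ := by
        by_contra hy0
        have hw0 : (w : V) ∉ S₀ := fun h0 => hw (hsub h0)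
        exact hedge _ ⟨hy, hy0⟩ _ ⟨hw2, hw0⟩ (G.adj_symm h)
      exact ⟨y, q, hy0, Nat.le_succ _⟩
    · obtain ⟨x, r, hx0, hlen⟩ := ih hy hv
      exact ⟨x, r, hx0, le_trans hlen (Nat.le_succ _)⟩

private lemma aux_main {V : Type*} (G : SimpleGraph V) {B S₁ S₀ S₂ : Set V}
    (hcover : S₁ ∪ S₂ = Set.univ) (hsub : S₀ ⊆ S₁)
    (hedge : ∀ a ∈ S₁ \ S₀, ∀ b ∈ S₂ \ S₀, ¬ G.Adj a b)
    (hclique : S₀.Pairwise G.Adj) :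
    ∀ (n : ℕ) {u v : ↥Bᶜ} (p : (G.induce Bᶜ).Walk u v), p.length ≤ n →
      ∀ (hu : (u : V) ∈ S₁) (hv : (v : V) ∈ S₁),
      (G.induce (S₁ ∩ Bᶜ)).Reachable ⟨u, hu, u.2⟩ ⟨v, hv, v.2⟩ := by
  intro n
  induction n with
  | zero =>
    intro u v p hp hu hv
    cases p with
    | nil => exact Reachable.refl _
    | cons h q => simp at hp
  | succ m ih =>
    intro u v p hp hu hv
    cases p with
    | nil => exact Reachable.refl _
    | @cons _ w _ h q =>
      have hq : q.length ≤ m := by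
        simpa using Nat.le_of_succ_le_succ (by simpa using hp)
      by_cases hw : (w : V) ∈ S₁
      · have h1 : (G.induce (S₁ ∩ Bᶜ)).Adj ⟨u, hu, u.2⟩ ⟨w, hw, w.2⟩ := h
        exact h1.reachable.trans (ih q hq hw hv)
      · have hw2 : (w : V) ∈ S₂ := by
          have : (w : V) ∈ S₁ ∪ S₂ := by rw [hcover]; trivial
          exact this.resolve_left hw
        have hu0 : (u : V) ∈ S₀ := by
          by_contra hu0
          have hw0 : (w : V) ∉ S₀ := fun h0 => hw (hsub h0)
          exact hedge _ ⟨hu, hu0⟩ _ ⟨hw2, hw0⟩ h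
        obtain ⟨x, r, hx0, hlen⟩ := aux_inner G hcover hsub hedge q hw hv
        have hreach2 := ih r (le_trans hlen hq) (hsub hx0) hv
        rcases eq_or_ne (u : V) (x : V) with heq | hne
        · have : (⟨u, hu, u.2⟩ : ↥(S₁ ∩ Bᶜ)) = ⟨x, hsub hx0, x.2⟩ := Subtype.ext heq
          rw [this]; exact hreach2
        · have hadj : (G.induce (S₁ ∩ Bᶜ)).Adj ⟨u, hu, u.2⟩ ⟨x, hsub hx0, x.2⟩ :=
            hclique hu0 hx0 hne
          exact hadj.reachable.trans hreach2

private def homB {V : Type*} (G : SimpleGraph V) {S₁ : Set V} (B₁ : Set ↥S₁) :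
    G.induce (S₁ ∩ (Subtype.val '' B₁)ᶜ) →g (G.induce S₁).induce B₁ᶜ where
  toFun y := ⟨⟨y.val, y.prop.1⟩, fun hmem => y.prop.2 ⟨⟨y.val, y.prop.1⟩, hmem, rfl⟩⟩
  map_rel' h := h

private def homC {V : Type*} (G : SimpleGraph V) {S₁ : Set V} (B' : Set V) :
    (G.induce S₁).induce (Subtype.val ⁻¹' B')ᶜ →g G.induce B'ᶜ where
  toFun x := ⟨x.val.val, x.prop⟩
  map_rel' h := h

/-- If `(S₁, S₀, S₂)` is a separation of the vertex set of `G` with `S₀` inducing a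
complete subgraph, and `B ⊆ S₁` is a minimal `(c,d)`-separator of the induced
subgraph on `S₁`, then `B` is a minimal `(c,d)`-separator of `G`. -/
theorem isMinSeparator_of_induce {V : Type*} (G : SimpleGraph V)
    (S₁ S₀ S₂ : Set V) (hcover : S₁ ∪ S₂ = Set.univ) (hinter : S₁ ∩ S₂ = S₀)
    (hedge : ∀ a ∈ S₁ \ S₀, ∀ b ∈ S₂ \ S₀, ¬ G.Adj a b)
    (hclique : S₀.Pairwise G.Adj)
    (c d : V) (hc : c ∈ S₁) (hd : d ∈ S₁) (B₁ : Set S₁)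
    (hmin : (G.induce S₁).IsMinSeparator ⟨c, hc⟩ ⟨d, hd⟩ B₁) :
    G.IsMinSeparator c d (Subtype.val '' B₁) := by
  have hsub : S₀ ⊆ S₁ := by rw [← hinter]; exact Set.inter_subset_left
  obtain ⟨⟨hcB, hdB, hnr⟩, hminimal⟩ := hmin
  have hc' : c ∈ (Subtype.val '' B₁)ᶜ := by
    rintro ⟨y, hy, hyv⟩
    exact hcB (by rwa [show y = ⟨c, hc⟩ from Subtype.ext hyv] at hy)
  have hd' : d ∈ (Subtype.val '' B₁)ᶜ := by
    rintro ⟨y, hy, hyv⟩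
    exact hdB (by rwa [show y = ⟨d, hd⟩ from Subtype.ext hyv] at hy)
  constructor
  · refine ⟨hc', hd', fun hr => ?_⟩
    obtain ⟨p⟩ := hr
    have hreach := aux_main G hcover hsub hedge hclique p.length p le_rfl hc hd
    have := hreach.map (homB G B₁)
    exact hnr this
  · rintro B' hss ⟨hc'', hd'', hnr'⟩
    have hB'sub : B' ⊆ Subtype.val '' B₁ := hss.1
    set B₁' : Set ↥S₁ := Subtype.val ⁻¹' B' with hB₁'
    have hsubset : B₁' ⊆ B₁ := by
      intro x hx
      obtain ⟨y, hy, hyv⟩ := hB'sub hx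
      rwa [show y = x from Subtype.ext hyv] at hy
    have hproper : B₁' ⊂ B₁ := by
      refine ⟨hsubset, fun hBB => ?_⟩
      obtain ⟨v, hvB, hvB'⟩ := Set.exists_of_ssubset hss
      obtain ⟨y, hy, hyv⟩ := hvB
      exact hvB' (by rw [← hyv]; exact hBB hy)
    refine hminimal B₁' hproper ⟨fun hmem => hc'' hmem, fun hmem => hd'' hmem, fun hr => ?_⟩
    exact hnr' (hr.map (homC G B'))
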